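/- Let (T_i)_{i ∈ I} be a family of finite metric spaces. For a finite metric space (X, d_X), define the relation R_X on X by: x R_X y if and only if there exist i ∈ I and a nonexpansive map t : T_i → X with x and y in the range of t. Then for every nonexpansive map f : X → Y between finite metric spaces, every maximally R_X-linked subset of X is contained in f⁻¹(B) for some maximally R_Y-linked subset B of Y; that is, the clustering scheme ML^T generated by the family (T_i) is functorial for nonexpansive maps. -/

import Mathlib

/-- A nonexpansive map between metric spaces. -/
def Nonexpansive {X Y : Type*} [MetricSpace X] [MetricSpace Y] (f : X → Y) : Prop :=
  ∀ x x' : X, dist (f x) (f x') ≤ dist x x'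

/-- A set is `R`-linked if any two of its points are related by `R`. -/
def IsLinked {X : Type*} (R : X → X → Prop) (S : Set X) : Prop :=
  ∀ x ∈ S, ∀ y ∈ S, R x y

/-- A maximally `R`-linked set: `R`-linked and not properly contained in any `R`-linked set. -/
def IsMaxLinked {X : Type*} (R : X → X → Prop) (S : Set X) : Prop :=
  IsLinked R S ∧ ∀ T : Set X, IsLinked R T → S ⊆ T → S = T

/-- The relation generated on `X` by a family of test metric spaces `T i`:
`x R y` iff some nonexpansive map from some `T i` into `X` has both `x` and `y`
in its range. -/
def genRel {I : Type*} (T : I → Type*) [∀ i, MetricSpace (T i)]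
    (X : Type*) [MetricSpace X] (x y : X) : Prop :=
  ∃ (i : I) (t : T i → X), Nonexpansive t ∧ x ∈ Set.range t ∧ y ∈ Set.range t

/-- the clustering scheme `ML^T` generated by a family of finite metric spaces
`(T i)` is functorial: for every nonexpansive `f : X → Y`, every maximally `R_X`-linked
subset of `X` is contained in `f⁻¹(B)` for some maximally `R_Y`-linked subset `B` of `Y`. -/
theorem genML_functorial {I : Type*} (T : I → Type*)
    [∀ i, MetricSpace (T i)] [∀ i, Fintype (T i)] [∀ i, Nonempty (T i)]
    {X Y : Type*} [MetricSpace X] [Fintype X] [Nonempty X]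
    [MetricSpace Y] [Fintype Y] [Nonempty Y]
    (f : X → Y) (hf : Nonexpansive f) :
    ∀ S : Set X, IsMaxLinked (genRel T X) S →
      ∃ B : Set Y, IsMaxLinked (genRel T Y) B ∧ S ⊆ f ⁻¹' B := by
  intro S hS
  -- the image of S is linked in Y
  have himg : IsLinked (genRel T Y) (f '' S) := by
    rintro _ ⟨x, hx, rfl⟩ _ ⟨y, hy, rfl⟩
    obtain ⟨i, t, ht, hxr, hyr⟩ := hS.1 x hx y hy
    exact ⟨i, f ∘ t, fun a b => (hf _ _).trans (ht a b),
      hxr.imp (fun a ha => by simp [ha]), hyr.imp (fun a ha => by simp [ha])⟩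
  -- pick a maximal linked superset of f '' S
  set C : Set (Set Y) := {A | IsLinked (genRel T Y) A ∧ f '' S ⊆ A}
  have hCfin : C.Finite := Set.Finite.subset (Set.finite_univ) (Set.subset_univ _)
  have hCne : C.Nonempty := ⟨f '' S, himg, le_refl _⟩
  obtain ⟨B, hBC, hBmax⟩ : ∃ B ∈ C, ∀ a' ∈ C, id B ≤ id a' → id B = id a' := by
    obtain ⟨B, hBC, hBm⟩ := Set.Finite.exists_maximalFor id C hCfin hCne
    exact ⟨B, hBC, fun a' ha' h => le_antisymm h (hBm ha' h)⟩
  refine ⟨B, ⟨hBC.1, fun T' hT' hBT' => hBmax T' ⟨hT', hBC.2.trans hBT'⟩ hBT'⟩,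
    fun x hx => hBC.2 ⟨x, hx, rfl⟩⟩
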